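/- For symmetric PSD V partitioned as [[V_xx, V_xu],[V_ux, V_uu]] with V_xx ≻ 0, the minimum of tr([[X Y^{-1} X^T, X],[X^T, Y]] · V) over the blocks V_ux (= V_xu^T) and V_uu subject to V ⪰ 0 (with V_xx fixed) equals 0, attained at V_ux = −Y^{-1} X^T V_xx and V_uu = V_ux V_xx^{-1} V_xu. -/

import Mathlib

open Matrix

private lemma trace_hermAdj_mul_self_nonneg {k l : Type*} [Fintype k] [Fintype l]
    (A : Matrix k l ℝ) : 0 ≤ (Aᴴ * A).trace := by
  simp only [trace, diag, mul_apply, conjTranspose_apply, star_trivial]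
  exact Finset.sum_nonneg fun i _ => Finset.sum_nonneg fun j _ => mul_self_nonneg _

private lemma trace_psd_mul_nonneg {N : Type*} [Fintype N] [DecidableEq N]
    {A B : Matrix N N ℝ} (hA : A.PosSemidef) (hB : B.PosSemidef) :
    0 ≤ (A * B).trace := by
  obtain ⟨C, rfl⟩ : ∃ C : Matrix N N ℝ, _ = Cᴴ * C := by
    open scoped MatrixOrder in
    obtain ⟨C, hC⟩ := CStarAlgebra.nonneg_iff_eq_star_mul_self.mp hA.nonneg
    exact ⟨C, hC⟩
  obtain ⟨D, rfl⟩ : ∃ D : Matrix N N ℝ, _ = Dᴴ * D := by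
    open scoped MatrixOrder in
    obtain ⟨D, hD⟩ := CStarAlgebra.nonneg_iff_eq_star_mul_self.mp hB.nonneg
    exact ⟨D, hD⟩
  have h : (Cᴴ * C * (Dᴴ * D)).trace = ((D * Cᴴ)ᴴ * (D * Cᴴ)).trace := by
    rw [conjTranspose_mul, conjTranspose_conjTranspose]
    simp only [Matrix.mul_assoc]
    rw [trace_mul_comm Cᴴ]
    simp only [Matrix.mul_assoc]
  rw [h]
  exact trace_hermAdj_mul_self_nonneg _

/-- For `Z = [[X Y⁻¹ Xᵀ, X], [Xᵀ, Y]]` with `Y ≻ 0` and fixed `V_xx ≻ 0`, the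
minimum of `tr(Z V)` over the blocks `V_xu = V_uxᵀ` and `V_uu` subject to `V ⪰ 0`
equals `0`, attained at `V_ux = −Y⁻¹ Xᵀ V_xx` and `V_uu = V_ux V_xx⁻¹ V_xu`. -/
theorem trace_ZV_min_over_blocks {n m : ℕ}
    (X : Matrix (Fin n) (Fin m) ℝ) (Y : Matrix (Fin m) (Fin m) ℝ)
    (hY : Y.PosDef)
    (Z : Matrix (Fin n ⊕ Fin m) (Fin n ⊕ Fin m) ℝ)
    (hZ : Z = fromBlocks (X * Y⁻¹ * Xᵀ) X Xᵀ Y)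
    (Vxx : Matrix (Fin n) (Fin n) ℝ) (hVxx : Vxx.PosDef)
    (Vuxstar : Matrix (Fin m) (Fin n) ℝ)
    (hVuxstar : Vuxstar = -(Y⁻¹ * Xᵀ * Vxx))
    (Vuustar : Matrix (Fin m) (Fin m) ℝ)
    (hVuustar : Vuustar = Vuxstar * Vxx⁻¹ * Vuxstarᵀ) :
    (∀ (Vux : Matrix (Fin m) (Fin n) ℝ) (Vuu : Matrix (Fin m) (Fin m) ℝ),
        (fromBlocks Vxx Vuxᵀ Vux Vuu).PosSemidef →
        0 ≤ (Z * fromBlocks Vxx Vuxᵀ Vux Vuu).trace) ∧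
    (fromBlocks Vxx Vuxstarᵀ Vuxstar Vuustar).PosSemidef ∧
    (Z * fromBlocks Vxx Vuxstarᵀ Vuxstar Vuustar).trace = 0 := by
  have hYs : Yᵀ = Y := by
    rw [← conjTranspose_eq_transpose_of_trivial]; exact hY.isHermitian
  have hVs : Vxxᵀ = Vxx := by
    rw [← conjTranspose_eq_transpose_of_trivial]; exact hVxx.isHermitian
  have hYY : Y * Y⁻¹ = 1 := mul_nonsing_inv Y ((isUnit_iff_isUnit_det Y).mp hY.isUnit)
  have hYY' : Y⁻¹ * Y = 1 := nonsing_inv_mul Y ((isUnit_iff_isUnit_det Y).mp hY.isUnit)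
  have hVV' : Vxx⁻¹ * Vxx = 1 :=
    nonsing_inv_mul Vxx ((isUnit_iff_isUnit_det Vxx).mp hVxx.isUnit)
  set B : Matrix (Fin m) (Fin n ⊕ Fin m) ℝ := fromCols Xᵀ Y with hB
  have hBH : Bᴴ = fromRows X Y := by
    rw [hB, conjTranspose_fromCols_eq_fromRows_conjTranspose,
        conjTranspose_eq_transpose_of_trivial, conjTranspose_eq_transpose_of_trivial,
        transpose_transpose, hYs]
  have hBZ : Z = Bᴴ * Y⁻¹ * B := by
    rw [hZ, hBH, hB, fromRows_mul, fromRows_mul_fromCols,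
        Matrix.mul_assoc X Y⁻¹ Y, hYY', Matrix.mul_one]
    simp only [hYY, Matrix.one_mul]
  set K : Matrix (Fin m) (Fin n) ℝ := -(Y⁻¹ * Xᵀ) with hK
  set L : Matrix (Fin n ⊕ Fin m) (Fin n) ℝ := fromRows 1 K with hL
  have hKV : Vuxstar = K * Vxx := by
    rw [hVuxstar, hK, Matrix.neg_mul, Matrix.mul_assoc]
  have hKVt : Vuxstarᵀ = Vxx * Kᵀ := by
    rw [hKV, transpose_mul, hVs]
  have hUU : Vuustar = K * Vxx * Kᵀ := by
    rw [hVuustar, hKVt, hKV, Matrix.mul_assoc (K * Vxx) Vxx⁻¹ (Vxx * Kᵀ),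
        ← Matrix.mul_assoc Vxx⁻¹ Vxx Kᵀ, hVV', Matrix.one_mul]
  have hLH : Lᴴ = fromCols 1 Kᵀ := by
    rw [hL, conjTranspose_fromRows_eq_fromCols_conjTranspose,
        conjTranspose_eq_transpose_of_trivial, conjTranspose_eq_transpose_of_trivial,
        transpose_one]
  have hVstar : fromBlocks Vxx Vuxstarᵀ Vuxstar Vuustar = L * Vxx * Lᴴ := by
    rw [hKVt, hKV, hUU, hLH, hL, fromRows_mul, fromRows_mul_fromCols]
    simp only [Matrix.one_mul, Matrix.mul_one]
  have hBL : B * L = 0 := by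
    rw [hB, hL, fromCols_mul_fromRows, Matrix.mul_one, hK, Matrix.mul_neg,
        ← Matrix.mul_assoc, hYY, Matrix.one_mul, add_neg_cancel]
  refine ⟨?_, ?_, ?_⟩
  · intro Vux Vuu hV
    have hZpsd : Z.PosSemidef := by
      rw [hBZ]
      exact (hY.inv.posSemidef).conjTranspose_mul_mul_same B
    exact trace_psd_mul_nonneg hZpsd hV
  · rw [hVstar]
    exact hVxx.posSemidef.mul_mul_conjTranspose_same L
  · have h0 : Bᴴ * Y⁻¹ * B * (L * Vxx * Lᴴ) = 0 := by
      simp only [Matrix.mul_assoc]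
      rw [← Matrix.mul_assoc B L (Vxx * Lᴴ), hBL, Matrix.zero_mul,
          Matrix.mul_zero, Matrix.mul_zero]
    rw [hBZ, hVstar, h0, trace_zero]
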